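/- Let μ̄ be a cap diagram with n caps. Then the assignment sending each cap with endpoints a<b to b−1/2 is a Δ-orientation of μ̄; moreover, if ν is any Δ-orientation of μ̄ with assigned values k_1 > k_2 > … > k_n, and m_1 > m_2 > … > m_n are the values assigned by the former (i.e. the right endpoints of the caps decreased by 1/2, listed decreasingly), then k_i ≤ m_i for every 1 ≤ i ≤ n. -/

import Mathlib

/-- A rational number is a *half-integer*, i.e. of the form `k + 1/2` for an integer `k`. -/
def IsHalfInt (q : ℚ) : Prop := ∃ k : ℤ, q = (k : ℚ) + 1/2

/-- A *cup diagram* (the same notion is also used for cap diagrams): a finite set of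
arcs `(a, b)` of half-integers with `a < b` (the *left* and *right endpoints*), such that
all endpoints of all arcs are pairwise distinct, and every half-integer strictly between
the endpoints of an arc is an endpoint of an arc nested inside it. -/
structure ArcDiagram where
  arcs : Finset (ℚ × ℚ)
  half_left : ∀ c ∈ arcs, IsHalfInt c.1
  half_right : ∀ c ∈ arcs, IsHalfInt c.2
  lt : ∀ c ∈ arcs, c.1 < c.2
  distinct : ∀ c ∈ arcs, ∀ c' ∈ arcs, c ≠ c' →
    c.1 ≠ c'.1 ∧ c.1 ≠ c'.2 ∧ c.2 ≠ c'.1 ∧ c.2 ≠ c'.2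
  nested : ∀ c ∈ arcs, ∀ x : ℚ, IsHalfInt x → c.1 < x → x < c.2 →
    ∃ c' ∈ arcs, (x = c'.1 ∨ x = c'.2) ∧ c.1 ≤ c'.1 ∧ c'.2 ≤ c.2

/-- A `Δ`-orientation of a cap diagram `mu`: it assigns to each cap with endpoints
`a < b` an integer `m` with `a < m < b` such that every other cap with endpoints
`a' < m < b'` satisfies `a' < a` and `b < b'`, the assigned integers being pairwise
distinct. -/
def IsDeltaOrientation (mu : ArcDiagram) (f : ℚ × ℚ → ℤ) : Prop :=
  (∀ c ∈ mu.arcs, c.1 < (f c : ℚ) ∧ (f c : ℚ) < c.2 ∧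
      ∀ c' ∈ mu.arcs, c' ≠ c → c'.1 < (f c : ℚ) → (f c : ℚ) < c'.2 →
        c'.1 < c.1 ∧ c.2 < c'.2) ∧
  (∀ c ∈ mu.arcs, ∀ c' ∈ mu.arcs, f c = f c' → c = c')

/-- The assignment sending each cap with endpoints `a < b` to `b - 1/2`. -/
def rightDelta : ℚ × ℚ → ℤ := fun c => ⌊c.2 - 1/2⌋

/-- Cast of `rightDelta` for a half-integer right endpoint. -/
lemma rightDelta_cast (c : ℚ × ℚ) (h : IsHalfInt c.2) : (rightDelta c : ℚ) = c.2 - 1/2 := by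
  obtain ⟨k, hk⟩ := h
  have h1 : c.2 - 1/2 = (k : ℚ) := by rw [hk]; ring
  rw [rightDelta, h1, Int.floor_intCast]

/-- Two half-integers that are close are equal or far. -/
lemma halfInt_add_one_le {a b : ℚ} (ha : IsHalfInt a) (hb : IsHalfInt b) (h : a < b) :
    a + 1 ≤ b := by
  obtain ⟨j, hj⟩ := ha; obtain ⟨k, hk⟩ := hb
  have : (j : ℚ) < k := by rw [hj, hk] at h; linarith
  have hjk : j < k := by exact_mod_cast this
  have : (j : ℚ) + 1 ≤ k := by exact_mod_cast hjk
  rw [hj, hk]; linarith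

/-- In a strictly decreasing list, earlier entries are larger. -/
lemma sorted_gt_get_lt {l : List ℤ} (hl : l.Pairwise (· > ·)) (a b : Fin l.length)
    (h : a < b) : l.get b < l.get a :=
  List.pairwise_iff_get.1 hl a b h

lemma sorted_gt_card_ge {l : List ℤ} (hl : l.Pairwise (· > ·)) (i : ℕ) (h : i < l.length) :
    i + 1 ≤ (l.toFinset.filter (fun x => l.get ⟨i, h⟩ ≤ x)).card := by
  have := Finset.card_le_card_of_injOn
    (f := fun j : Fin (i + 1) => l.get ⟨j.1, by omega⟩)
    (s := (Finset.univ : Finset (Fin (i + 1))))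
    (t := l.toFinset.filter (fun x => l.get ⟨i, h⟩ ≤ x))
    (by
      intro j _
      refine Finset.mem_filter.2 ⟨List.mem_toFinset.2 (l.get_mem _), ?_⟩
      rcases eq_or_lt_of_le (Nat.lt_succ_iff.1 j.2) with hj | hj
      · simp [hj]
      · exact le_of_lt (sorted_gt_get_lt hl ⟨j.1, by omega⟩ ⟨i, h⟩ hj))
    (by
      intro a _ b _ hab
      rcases lt_trichotomy a b with hab' | hab' | hab'
      · exact absurd hab (ne_of_gt (sorted_gt_get_lt hl ⟨a.1, by omega⟩ ⟨b.1, by omega⟩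
          (by exact_mod_cast hab')))
      · exact hab'
      · exact absurd hab.symm (ne_of_gt (sorted_gt_get_lt hl ⟨b.1, by omega⟩ ⟨a.1, by omega⟩
          (by exact_mod_cast hab'))))
  simpa using this

lemma sorted_gt_le_get {l : List ℤ} (hl : l.Pairwise (· > ·)) (i : ℕ) (h : i < l.length)
    (t : ℤ) (hc : i + 1 ≤ (l.toFinset.filter (fun x => t ≤ x)).card) :
    t ≤ l.get ⟨i, h⟩ := by
  by_contra h'
  push_neg at h'
  have hsub : l.toFinset.filter (fun x => t ≤ x) ⊆ (l.take i).toFinset := by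
    intro x hx
    obtain ⟨hxl, hxt⟩ := Finset.mem_filter.1 hx
    obtain ⟨⟨j, hj⟩, rfl⟩ := List.mem_iff_get.1 (List.mem_toFinset.1 hxl)
    have hji : j < i := by
      by_contra hji
      push_neg at hji
      rcases eq_or_lt_of_le hji with hj' | hj'
      · exact absurd hxt (by simp [← hj'] at h' ⊢; omega)
      · have := sorted_gt_get_lt hl ⟨i, h⟩ ⟨j, hj⟩ hj'
        omega
    refine List.mem_toFinset.2 ?_
    have hlen : j < (l.take i).length := by
      rw [List.length_take]; omega
    have : (l.take i).get ⟨j, hlen⟩ = l.get ⟨j, hj⟩ := by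
      simp [List.getElem_take]
    rw [← this]
    exact List.get_mem _ _
  have hcard := Finset.card_le_card hsub
  have h1 : (l.take i).toFinset.card ≤ (l.take i).length := List.toFinset_card_le _
  have h2 : (l.take i).length ≤ i := by rw [List.length_take]; omega
  omega

/-- For a cap diagram `mu` with `n` caps, the assignment sending each cap with endpoints
`a < b` to `b - 1/2` is a `Δ`-orientation; moreover, if `ν` is any `Δ`-orientation of
`mu` with assigned values `k_1 > … > k_n` and `m_1 > … > m_n` are the values assigned by
the former, then `k_i ≤ m_i` for every `i`. -/
theorem rightDelta_isDeltaOrientation_and_maximal (mu : ArcDiagram) (n : ℕ)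
    (hn : mu.arcs.card = n) :
    IsDeltaOrientation mu rightDelta ∧
    ∀ ν : ℚ × ℚ → ℤ, IsDeltaOrientation mu ν →
      ∀ ks ms : List ℤ, ks.Pairwise (· > ·) → ms.Pairwise (· > ·) →
        (∀ x : ℤ, x ∈ ks ↔ x ∈ mu.arcs.image ν) →
        (∀ x : ℤ, x ∈ ms ↔ x ∈ mu.arcs.image rightDelta) →
        ∀ (i : ℕ) (h1 : i < ks.length) (h2 : i < ms.length),
          ks.get ⟨i, h1⟩ ≤ ms.get ⟨i, h2⟩ := by
  have hrd : IsDeltaOrientation mu rightDelta := by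
    constructor
    · intro c hc
      have hcast := rightDelta_cast c (mu.half_right c hc)
      have hab := mu.lt c hc
      have hge1 : c.1 + 1 ≤ c.2 :=
        halfInt_add_one_le (mu.half_left c hc) (mu.half_right c hc) hab
      refine ⟨by rw [hcast]; linarith, by rw [hcast]; linarith, ?_⟩
      intro c' hc' hne h1 h2
      rw [hcast] at h1 h2
      -- first show c.2 < c'.2
      have hb : c.2 < c'.2 := by
        have hne2 : c.2 ≠ c'.2 := (mu.distinct c hc c' hc' (Ne.symm hne)).2.2.2
        obtain ⟨k, hk⟩ := mu.half_right c hc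
        obtain ⟨k', hk'⟩ := mu.half_right c' hc'
        have : (k : ℚ) < (k' : ℚ) + 1/2 := by rw [hk] at h2; rw [hk'] at h2; linarith
        have hkk : k ≤ k' := by
          have : (k : ℚ) < (k' : ℚ) + 1 := by linarith
          have : k < k' + 1 := by exact_mod_cast this
          omega
        have hkk2 : k ≠ k' := fun h => hne2 (by rw [hk, hk', h])
        have : (k : ℚ) + 1 ≤ (k' : ℚ) := by exact_mod_cast (by omega : k + 1 ≤ k')
        rw [hk, hk']; linarith
      refine ⟨?_, hb⟩
      -- now show c'.1 < c.1
      by_contra hcon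
      push_neg at hcon
      have hne1 : c.1 ≠ c'.1 := (mu.distinct c hc c' hc' (Ne.symm hne)).1
      have h11 : c.1 < c'.1 := lt_of_le_of_ne hcon hne1
      obtain ⟨c'', hc'', hx, hl, hr⟩ := mu.nested c hc c'.1 (mu.half_left c' hc') h11
        (by linarith)
      have hcc : c'' = c' := by
        by_contra hne3
        obtain ⟨d1, _, d3, _⟩ := mu.distinct c'' hc'' c' hc' hne3
        rcases hx with hx | hx
        · exact d1 hx.symm
        · exact d3 hx.symm
      rw [hcc] at hr
      linarith
    · intro c hc c' hc' hfe
      by_contra hne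
      have hne2 : c.2 ≠ c'.2 := (mu.distinct c hc c' hc' hne).2.2.2
      have h1 := rightDelta_cast c (mu.half_right c hc)
      have h2 := rightDelta_cast c' (mu.half_right c' hc')
      rw [hfe, h2] at h1
      exact hne2 (by linarith)
  refine ⟨hrd, ?_⟩
  intro ν hν ks ms hks hms hksmem hmsmem i h1 h2
  -- pointwise domination
  have hpw : ∀ c ∈ mu.arcs, ν c ≤ rightDelta c := by
    intro c hc
    have hlt := (hν.1 c hc).2.1
    have hcast := rightDelta_cast c (mu.half_right c hc)
    obtain ⟨k, hk⟩ := mu.half_right c hc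
    have hrdk : (rightDelta c : ℚ) = (k : ℚ) := by rw [hcast, hk]; ring
    have : (ν c : ℚ) < (k : ℚ) + 1 := by rw [hk] at hlt; linarith
    have : ν c < k + 1 := by exact_mod_cast this
    have hrk : rightDelta c = k := by exact_mod_cast hrdk
    omega
  -- counting: for every t, #(image ν ≥ t) ≤ #(image rightDelta ≥ t)
  have hcount : ∀ t : ℤ, ((mu.arcs.image ν).filter (fun x => t ≤ x)).card ≤
      ((mu.arcs.image rightDelta).filter (fun x => t ≤ x)).card := by
    intro t
    set S := mu.arcs.filter (fun c => t ≤ ν c) with hS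
    have hSsub : S ⊆ mu.arcs := Finset.filter_subset _ _
    have e1 : (mu.arcs.image ν).filter (fun x => t ≤ x) = S.image ν := by
      ext x
      simp only [Finset.mem_filter, Finset.mem_image, hS]
      constructor
      · rintro ⟨⟨c, hc, rfl⟩, ht⟩; exact ⟨c, ⟨hc, ht⟩, rfl⟩
      · rintro ⟨c, ⟨hc, ht⟩, rfl⟩; exact ⟨⟨c, hc, rfl⟩, ht⟩
    have hinjν : Set.InjOn ν S := fun a ha b hb h =>
      hν.2 a (hSsub ha) b (hSsub hb) h
    have hinjr : Set.InjOn rightDelta S := fun a ha b hb h =>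
      hrd.2 a (hSsub ha) b (hSsub hb) h
    have hsub2 : S.image rightDelta ⊆ (mu.arcs.image rightDelta).filter (fun x => t ≤ x) := by
      intro x hx
      obtain ⟨c, hc, rfl⟩ := Finset.mem_image.1 hx
      obtain ⟨hca, hct⟩ := Finset.mem_filter.1 hc
      exact Finset.mem_filter.2 ⟨Finset.mem_image.2 ⟨c, hca, rfl⟩,
        le_trans hct (hpw c hca)⟩
    calc ((mu.arcs.image ν).filter (fun x => t ≤ x)).card
        = (S.image ν).card := by rw [e1]
      _ = S.card := Finset.card_image_of_injOn hinjν
      _ = (S.image rightDelta).card := (Finset.card_image_of_injOn hinjr).symm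
      _ ≤ _ := Finset.card_le_card hsub2
  have hksfin : ks.toFinset = mu.arcs.image ν := by
    ext x; rw [List.mem_toFinset]; exact hksmem x
  have hmsfin : ms.toFinset = mu.arcs.image rightDelta := by
    ext x; rw [List.mem_toFinset]; exact hmsmem x
  set t := ks.get ⟨i, h1⟩ with ht
  have step1 := sorted_gt_card_ge hks i h1
  rw [← ht, hksfin] at step1
  have step2 := le_trans step1 (hcount t)
  rw [← hmsfin] at step2
  exact sorted_gt_le_get hms i h2 t step2
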